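/- Let n ∈ ℕ, and suppose there exist j, k with j + k = n and 3^k < 2^j < 3^{k+1}. Let β = log 3/(log 2 + log 3). Then {nβ} ∈ (1 − β, 1), where {·} denotes fractional part. Conversely, if {nβ} ∈ (1 − β, 1) then such j, k exist. -/

import Mathlib

/-- Sturmian coding of the interlacing of powers of 2 and 3: with
`β = log 3/(log 2 + log 3)`, there exist `j + k = n` with `3^k < 2^j < 3^{k+1}`
iff the fractional part of `n β` lies in `(1 - β, 1)`. -/
theorem sturmian_coding (n : ℕ) :
    (∃ j k : ℕ, j + k = n ∧ 3 ^ k < 2 ^ j ∧ 2 ^ j < 3 ^ (k + 1)) ↔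
      Int.fract ((n : ℝ) * (Real.log 3 / (Real.log 2 + Real.log 3))) ∈
        Set.Ioo (1 - Real.log 3 / (Real.log 2 + Real.log 3)) 1 := by
  have l2 : (0:ℝ) < Real.log 2 := Real.log_pos (by norm_num)
  have l3 : (0:ℝ) < Real.log 3 := Real.log_pos (by norm_num)
  have hL : (0:ℝ) < Real.log 2 + Real.log 3 := by linarith
  set β : ℝ := Real.log 3 / (Real.log 2 + Real.log 3) with hβ
  have hβ0 : 0 < β := div_pos l3 hL
  have hβ1 : β < 1 := (div_lt_one hL).2 (by linarith)
  have key : ∀ m : ℕ, (m:ℝ) * β = (m:ℝ) * Real.log 3 / (Real.log 2 + Real.log 3) := by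
    intro m; rw [hβ, mul_div_assoc]
  constructor
  · rintro ⟨j, k, hjk, h1, h2⟩
    have h1' : (k:ℝ) * Real.log 3 < (j:ℝ) * Real.log 2 := by
      have := Real.log_lt_log (by positivity) (show ((3:ℝ))^k < (2:ℝ)^j by exact_mod_cast h1)
      rwa [Real.log_pow, Real.log_pow] at this
    have h2' : (j:ℝ) * Real.log 2 < ((k:ℝ)+1) * Real.log 3 := by
      have := Real.log_lt_log (by positivity) (show ((2:ℝ))^j < (3:ℝ)^(k+1) by exact_mod_cast h2)
      rw [Real.log_pow, Real.log_pow] at this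
      push_cast at this ⊢; linarith
    have hn : (j:ℝ) + (k:ℝ) = (n:ℝ) := by exact_mod_cast hjk
    have hA : (n:ℝ) * β < j := by
      rw [key, div_lt_iff₀ hL]; nlinarith
    have hB : (j:ℝ) < (n:ℝ) * β + β := by
      rw [key, hβ, ← add_div, lt_div_iff₀ hL]; nlinarith
    have hfl : ⌊(n:ℝ) * β⌋ = (j:ℤ) - 1 := by
      rw [Int.floor_eq_iff]
      push_cast
      constructor <;> linarith
    have : Int.fract ((n:ℝ) * β) = (n:ℝ) * β - ((j:ℝ) - 1) := by
      rw [Int.fract, hfl]; push_cast; ring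

    constructor <;> (rw [this]) <;> linarith
  · rintro ⟨hlo, hhi⟩

    have hn0 : n ≠ 0 := by
      rintro rfl
      simp [Int.fract] at hlo
      linarith
    have hfl0 : (0:ℤ) ≤ ⌊(n:ℝ) * β⌋ := Int.floor_nonneg.2 (by positivity)
    set jz : ℤ := ⌊(n:ℝ) * β⌋ + 1 with hjz
    have hj1 : (n:ℝ) * β < (jz:ℝ) := by
      rw [hjz]; push_cast; exact Int.lt_floor_add_one _
    have hj2 : (jz:ℝ) < (n:ℝ) * β + β := by
      rw [Int.fract] at hlo
      rw [hjz]; push_cast; linarith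
    have hnβ : (n:ℝ) * β ≤ n := by nlinarith [Nat.cast_nonneg (α := ℝ) n]
    have hjn : jz ≤ n := by
      have : (jz:ℝ) < (n:ℝ) + 1 := by linarith
      exact_mod_cast Int.lt_add_one_iff.1 (by exact_mod_cast this)
    have hjz0 : 0 ≤ jz := by omega
    refine ⟨jz.toNat, n - jz.toNat, ?_, ?_, ?_⟩
    · have : (jz.toNat : ℤ) ≤ n := by rwa [Int.toNat_of_nonneg hjz0]
      omega
    all_goals {
      have hjcast : ((jz.toNat : ℕ) : ℝ) = (jz:ℝ) := by
        exact_mod_cast Int.toNat_of_nonneg hjz0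
      have hjle : jz.toNat ≤ n := by
        have : (jz.toNat : ℤ) ≤ n := by rwa [Int.toNat_of_nonneg hjz0]
        omega
      have hkcast : ((n - jz.toNat : ℕ) : ℝ) = (n:ℝ) - (jz:ℝ) := by
        push_cast [hjle]
        rw [hjcast]
      have hA : ((n - jz.toNat : ℕ):ℝ) * Real.log 3 < ((jz.toNat : ℕ):ℝ) * Real.log 2 := by
        rw [hkcast, hjcast]
        have : (n:ℝ) * Real.log 3 < (jz:ℝ) * (Real.log 2 + Real.log 3) := by
          rw [key, div_lt_iff₀ hL] at hj1; linarith
        nlinarith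
      have hB : ((jz.toNat : ℕ):ℝ) * Real.log 2 < (((n - jz.toNat : ℕ):ℝ) + 1) * Real.log 3 := by
        rw [hkcast, hjcast]
        have : (jz:ℝ) * (Real.log 2 + Real.log 3) < ((n:ℝ) + 1) * Real.log 3 := by
          rw [key, hβ, ← add_div, lt_div_iff₀ hL] at hj2; linarith
        nlinarith
      first
      | (show 3 ^ (n - jz.toNat) < 2 ^ jz.toNat
         have : (3:ℝ) ^ (n - jz.toNat) < (2:ℝ) ^ jz.toNat := by
           rw [← Real.log_lt_log_iff (by positivity) (by positivity),
             Real.log_pow, Real.log_pow]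
           exact_mod_cast hA
         exact_mod_cast this)
      | (show 2 ^ jz.toNat < 3 ^ (n - jz.toNat + 1)
         have : (2:ℝ) ^ jz.toNat < (3:ℝ) ^ (n - jz.toNat + 1) := by
           rw [← Real.log_lt_log_iff (by positivity) (by positivity),
             Real.log_pow, Real.log_pow]
           push_cast
           push_cast at hB
           linarith
         exact_mod_cast this)
    }
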